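/- Let α > −1 be real and j ≥ 1 an integer. There exist real polynomials P and Q (depending on j and α) such that P has degree at most 2j−3 and only odd-degree terms (with P = 0 when j = 1), Q has degree at most 2j−2 and only even-degree terms, and for all z > 0: z^{2j−1} · J_α^{(2j−1)}(z) = ( (−1)^j · z^{2j−1} + P(z) ) · J_{α+1}(z) + Q(z) · J_α(z), where J_α^{(m)} denotes the m-th derivative of J_α on (0,∞). -/

import Mathlib

open Filter Topology

/-- The Bessel function of the first kind, for `x > 0`,
`J_α(x) = Σ_{k=0}^∞ (-1)^k (x/2)^{2k+α} / (k! Γ(k+α+1))`. -/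
noncomputable def besselJ (α x : ℝ) : ℝ :=
  ∑' k : ℕ, (-1 : ℝ) ^ k * (x / 2) ^ (2 * (k : ℝ) + α) /
    ((Nat.factorial k : ℝ) * Real.Gamma ((k : ℝ) + α + 1))


noncomputable def besselG (α t : ℝ) : ℝ :=
  ∑' k : ℕ, (-1 : ℝ) ^ k * t ^ k / ((Nat.factorial k : ℝ) * Real.Gamma ((k : ℝ) + α + 1))

lemma gamma_pos' (α : ℝ) (hα : -1 < α) (k : ℕ) : 0 < Real.Gamma ((k : ℝ) + α + 1) := by
  apply Real.Gamma_pos_of_pos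
  have : (0:ℝ) ≤ (k:ℝ) := Nat.cast_nonneg k
  linarith

lemma summable_u (α : ℝ) (hα : -1 < α) (R : ℝ) (hR : 0 < R) :
    Summable (fun k : ℕ => ((k : ℝ) + 1) * R ^ k /
      ((Nat.factorial k : ℝ) * Real.Gamma ((k : ℝ) + α + 1))) := by
  have hfacpos : ∀ k : ℕ, (0:ℝ) < (Nat.factorial k : ℝ) := fun k => by
    exact_mod_cast Nat.factorial_pos k
  have hpos : ∀ k : ℕ, 0 < ((k : ℝ) + 1) * R ^ k /
      ((Nat.factorial k : ℝ) * Real.Gamma ((k : ℝ) + α + 1)) := by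
    intro k
    have h1 : (0:ℝ) < (k:ℝ) + 1 := by positivity
    have h2 := hfacpos k
    have h3 := gamma_pos' α hα k
    positivity
  apply summable_of_ratio_test_tendsto_lt_one (l := 0) one_pos
  · exact Eventually.of_forall fun k => (hpos k).ne'
  · have key : Tendsto (fun k : ℕ => R * ((k:ℝ) + 2) / (((k:ℝ)+1)^2 * ((k:ℝ) + α + 1)))
        atTop (𝓝 0) := by
      apply squeeze_zero (fun k => by
          have h1 : (0:ℝ) < (k:ℝ)+1 := by positivity
          have hkα : (0:ℝ) < (k:ℝ)+α+1 := by nlinarith [Nat.cast_nonneg (α := ℝ) k]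
          positivity)
        (g := fun k : ℕ => (2 * R / (α + 1)) / ((k:ℝ)+1))
      · intro k
        have h1 : (0:ℝ) < (k:ℝ)+1 := by positivity
        have hk0 : (0:ℝ) ≤ (k:ℝ) := Nat.cast_nonneg k
        have hkα : (0:ℝ) < (k:ℝ)+α+1 := by nlinarith
        have hα1 : (0:ℝ) < α + 1 := by linarith
        rw [div_div, div_le_div_iff₀ (by positivity) (by positivity)]
        nlinarith [mul_le_mul (show (k:ℝ)+2 ≤ 2*((k:ℝ)+1) by linarith)
          (show α+1 ≤ (k:ℝ)+α+1 by linarith) hα1.le (by positivity : (0:ℝ) ≤ 2*((k:ℝ)+1)),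
          mul_nonneg (mul_nonneg hR.le (by positivity : (0:ℝ) ≤ ((k:ℝ)+1))) hkα.le,
          sq_nonneg ((k:ℝ)+1), hR.le,
          mul_le_mul_of_nonneg_left (mul_le_mul (show (k:ℝ)+2 ≤ 2*((k:ℝ)+1) by linarith)
            (show α+1 ≤ (k:ℝ)+α+1 by linarith) hα1.le
            (by positivity : (0:ℝ) ≤ 2*((k:ℝ)+1))) (mul_nonneg hR.le h1.le)]
      · have h := tendsto_const_div_atTop_nhds_zero_nat (2 * R / (α + 1))
        have h2 : Tendsto (fun k : ℕ => k + 1) atTop atTop := tendsto_add_atTop_nat 1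
        refine (h.comp h2).congr fun k => ?_
        simp [Function.comp]
    refine key.congr fun k => ?_
    have h2 := hfacpos k
    have h3 := gamma_pos' α hα k
    have hk0 : (0:ℝ) ≤ (k:ℝ) := Nat.cast_nonneg k
    have hkα : (0:ℝ) < (k:ℝ)+α+1 := by nlinarith
    rw [Real.norm_of_nonneg (hpos (k+1)).le, Real.norm_of_nonneg (hpos k).le]
    have hΓ : Real.Gamma (((k+1:ℕ):ℝ) + α + 1) = ((k:ℝ) + α + 1) * Real.Gamma ((k:ℝ) + α + 1) := by
      push_cast
      rw [show (k:ℝ) + 1 + α + 1 = ((k:ℝ) + α + 1) + 1 by ring, Real.Gamma_add_one hkα.ne']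
    have hfac : ((Nat.factorial (k+1) : ℕ) : ℝ) = ((k:ℝ)+1) * (Nat.factorial k : ℝ) := by
      rw [Nat.factorial_succ]; push_cast; ring
    rw [hΓ, hfac]
    push_cast
    have h1 : (0:ℝ) < (k:ℝ)+1 := by positivity
    field_simp
    ring

lemma besselG_summable (α : ℝ) (hα : -1 < α) (t : ℝ) :
    Summable (fun k : ℕ => (-1 : ℝ) ^ k * t ^ k /
      ((Nat.factorial k : ℝ) * Real.Gamma ((k : ℝ) + α + 1))) := by
  apply Summable.of_norm_bounded (summable_u α hα (|t|+1) (by positivity))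
  intro k
  have h2 : (0:ℝ) < (Nat.factorial k : ℝ) := by exact_mod_cast Nat.factorial_pos k
  have h3 := gamma_pos' α hα k
  rw [norm_div, norm_mul, norm_pow, norm_pow, norm_neg, norm_one, one_pow, one_mul,
    Real.norm_of_nonneg (by positivity : (0:ℝ) ≤ (Nat.factorial k : ℝ) * Real.Gamma ((k:ℝ)+α+1))]
  gcongr
  calc ‖t‖ ^ k ≤ (|t|+1) ^ k := by
        apply pow_le_pow_left₀ (norm_nonneg t)
        rw [Real.norm_eq_abs]; linarith
    _ ≤ ((k:ℝ)+1) * (|t|+1) ^ k := by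
        nlinarith [pow_nonneg (by positivity : (0:ℝ) ≤ |t|+1) k, Nat.cast_nonneg (α := ℝ) k]

lemma besselG_hasDerivAt (α : ℝ) (hα : -1 < α) (t : ℝ) :
    HasDerivAt (besselG α) (-(besselG (α+1) t)) t := by
  set R : ℝ := |t| + 1 with hRdef
  have hR1 : (1:ℝ) ≤ R := by rw [hRdef]; have := abs_nonneg t; linarith
  have hR0 : (0:ℝ) < R := by linarith
  have hmem : t ∈ Metric.ball (0:ℝ) R := by
    rw [Metric.mem_ball, dist_zero_right, Real.norm_eq_abs, hRdef]; linarith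
  have hbound : ∀ (k : ℕ) (y : ℝ), y ∈ Metric.ball (0:ℝ) R →
      ‖(-1:ℝ)^k * ((k:ℝ) * y^(k-1)) / ((Nat.factorial k : ℝ) * Real.Gamma ((k:ℝ)+α+1))‖
        ≤ ((k : ℝ) + 1) * R ^ k / ((Nat.factorial k : ℝ) * Real.Gamma ((k : ℝ) + α + 1)) := by
    intro k y hy
    rw [Metric.mem_ball, dist_zero_right, Real.norm_eq_abs] at hy
    have h2 : (0:ℝ) < (Nat.factorial k : ℝ) := by exact_mod_cast Nat.factorial_pos k
    have h3 := gamma_pos' α hα k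
    rw [norm_div, norm_mul, norm_mul, norm_pow, norm_pow, norm_neg, norm_one, one_pow, one_mul,
      Real.norm_of_nonneg (by positivity : (0:ℝ) ≤ (Nat.factorial k : ℝ) * Real.Gamma ((k:ℝ)+α+1)),
      Real.norm_of_nonneg (Nat.cast_nonneg k), Real.norm_eq_abs]
    gcongr
    · linarith
    · calc |y| ^ (k-1) ≤ R ^ (k-1) := pow_le_pow_left₀ (abs_nonneg y) hy.le _
        _ ≤ R ^ k := pow_le_pow_right₀ hR1 (Nat.sub_le k 1)
  have hderiv : HasDerivAt (fun x : ℝ => ∑' k : ℕ, (-1:ℝ)^k * x^k /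
        ((Nat.factorial k : ℝ) * Real.Gamma ((k:ℝ)+α+1)))
      (∑' k : ℕ, (-1:ℝ)^k * ((k:ℝ) * t^(k-1)) /
        ((Nat.factorial k : ℝ) * Real.Gamma ((k:ℝ)+α+1))) t := by
    have hg : ∀ (k : ℕ) (y : ℝ), y ∈ Metric.ball (0:ℝ) R →
        HasDerivAt (fun x : ℝ => (-1:ℝ)^k * x^k /
          ((Nat.factorial k : ℝ) * Real.Gamma ((k:ℝ)+α+1)))
        ((-1:ℝ)^k * ((k:ℝ) * y^(k-1)) /
          ((Nat.factorial k : ℝ) * Real.Gamma ((k:ℝ)+α+1))) y := fun k y _ =>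
      ((hasDerivAt_pow k y).const_mul ((-1:ℝ)^k)).div_const _
    exact hasDerivAt_tsum_of_isPreconnected (summable_u α hα R hR0) Metric.isOpen_ball
      (convex_ball _ _).isPreconnected hg hbound (Metric.mem_ball_self hR0)
      (besselG_summable α hα 0) hmem
  have hsum' : Summable (fun k : ℕ => (-1:ℝ)^k * ((k:ℝ) * t^(k-1)) /
      ((Nat.factorial k : ℝ) * Real.Gamma ((k:ℝ)+α+1))) :=
    Summable.of_norm_bounded (summable_u α hα R hR0) (fun k => hbound k t hmem)
  have hval : (∑' k : ℕ, (-1:ℝ)^k * ((k:ℝ) * t^(k-1)) /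
      ((Nat.factorial k : ℝ) * Real.Gamma ((k:ℝ)+α+1))) = -(besselG (α+1) t) := by
    rw [Summable.tsum_eq_zero_add hsum']
    have h0 : (-1:ℝ)^0 * (((0:ℕ):ℝ) * t^(0-1)) /
        ((Nat.factorial 0 : ℝ) * Real.Gamma (((0:ℕ):ℝ)+α+1)) = 0 := by simp
    rw [h0, zero_add]
    have hterm : ∀ k : ℕ, (-1:ℝ)^(k+1) * (((k+1:ℕ):ℝ) * t^((k+1)-1)) /
        ((Nat.factorial (k+1) : ℝ) * Real.Gamma (((k+1:ℕ):ℝ)+α+1))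
        = -((-1:ℝ)^k * t^k / ((Nat.factorial k : ℝ) * Real.Gamma ((k:ℝ)+(α+1)+1))) := by
      intro k
      have h2 : (0:ℝ) < (Nat.factorial k : ℝ) := by exact_mod_cast Nat.factorial_pos k
      have h3 := gamma_pos' (α+1) (by linarith) k
      have hΓ : Real.Gamma (((k+1:ℕ):ℝ)+α+1) = Real.Gamma ((k:ℝ)+(α+1)+1) := by
        push_cast; ring_nf
      have hfac : ((Nat.factorial (k+1) : ℕ) : ℝ) = ((k:ℝ)+1) * (Nat.factorial k : ℝ) := by
        rw [Nat.factorial_succ]; push_cast; ring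
      rw [hΓ, hfac, Nat.add_sub_cancel, pow_succ]
      push_cast
      have hk1 : (0:ℝ) < (k:ℝ)+1 := by positivity
      field_simp
    rw [tsum_congr hterm, tsum_neg]
    rfl
  rw [hval] at hderiv
  exact hderiv

lemma besselJ_eq (α x : ℝ) (hx : 0 < x) :
    besselJ α x = (x/2) ^ α * besselG α (x^2/4) := by
  unfold besselJ besselG
  rw [← tsum_mul_left]
  apply tsum_congr
  intro k
  have h2 : (0:ℝ) < x/2 := by linarith
  have hpow : (x/2) ^ (2*(k:ℝ) + α) = (x^2/4)^k * (x/2)^α := by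
    rw [Real.rpow_add h2, show (2*(k:ℝ)) = ((2*k : ℕ) : ℝ) by push_cast; ring,
      Real.rpow_natCast, pow_mul]
    congr 2
    ring
  rw [hpow]
  ring

lemma besselG_recurrence (α : ℝ) (hα : -1 < α) (t : ℝ) :
    besselG α t = (α+1) * besselG (α+1) t - t * besselG (α+2) t := by
  have hα1 : (-1:ℝ) < α + 1 := by linarith
  have hα2 : (-1:ℝ) < α + 2 := by linarith
  have hs0 := besselG_summable α hα t
  have hs1 := besselG_summable (α+1) hα1 t
  have hs2' : Summable (fun k : ℕ => (α+1) * ((-1:ℝ)^k * t^k /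
      ((Nat.factorial k : ℝ) * Real.Gamma ((k:ℝ)+(α+1)+1)))) := hs1.mul_left _
  -- difference series
  have hdiff : besselG α t - (α+1) * besselG (α+1) t
      = ∑' k : ℕ, ((-1:ℝ)^k * t^k / ((Nat.factorial k : ℝ) * Real.Gamma ((k:ℝ)+α+1))
        - (α+1) * ((-1:ℝ)^k * t^k / ((Nat.factorial k : ℝ) * Real.Gamma ((k:ℝ)+(α+1)+1)))) := by
    unfold besselG
    rw [← tsum_mul_left, ← Summable.tsum_sub hs0 hs2']
  have hterm : ∀ k : ℕ,
      ((-1:ℝ)^k * t^k / ((Nat.factorial k : ℝ) * Real.Gamma ((k:ℝ)+α+1))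
        - (α+1) * ((-1:ℝ)^k * t^k / ((Nat.factorial k : ℝ) * Real.Gamma ((k:ℝ)+(α+1)+1))))
      = (-1:ℝ)^k * t^k * (k:ℝ) / ((Nat.factorial k : ℝ) * Real.Gamma ((k:ℝ)+(α+1)+1)) := by
    intro k
    have h2 : (0:ℝ) < (Nat.factorial k : ℝ) := by exact_mod_cast Nat.factorial_pos k
    have h3 := gamma_pos' α hα k
    have hkα : (0:ℝ) < (k:ℝ)+α+1 := by nlinarith [Nat.cast_nonneg (α := ℝ) k]
    have hΓ : Real.Gamma ((k:ℝ)+(α+1)+1) = ((k:ℝ)+α+1) * Real.Gamma ((k:ℝ)+α+1) := by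
      rw [show (k:ℝ)+(α+1)+1 = ((k:ℝ)+α+1)+1 by ring, Real.Gamma_add_one hkα.ne']
    rw [hΓ]
    field_simp
    ring
  have hsum3 : Summable (fun k : ℕ =>
      (-1:ℝ)^k * t^k * (k:ℝ) / ((Nat.factorial k : ℝ) * Real.Gamma ((k:ℝ)+(α+1)+1))) := by
    rw [← funext hterm]
    exact hs0.sub hs2'
  have hshift : (∑' k : ℕ,
      (-1:ℝ)^k * t^k * (k:ℝ) / ((Nat.factorial k : ℝ) * Real.Gamma ((k:ℝ)+(α+1)+1)))
      = -(t * besselG (α+2) t) := by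
    rw [Summable.tsum_eq_zero_add hsum3]
    have h0 : (-1:ℝ)^0 * t^0 * ((0:ℕ):ℝ) /
        ((Nat.factorial 0 : ℝ) * Real.Gamma (((0:ℕ):ℝ)+(α+1)+1)) = 0 := by simp
    rw [h0, zero_add]
    have hterm2 : ∀ k : ℕ, (-1:ℝ)^(k+1) * t^(k+1) * (((k+1:ℕ)):ℝ) /
        ((Nat.factorial (k+1) : ℝ) * Real.Gamma (((k+1:ℕ):ℝ)+(α+1)+1))
        = -(t * ((-1:ℝ)^k * t^k / ((Nat.factorial k : ℝ) * Real.Gamma ((k:ℝ)+(α+2)+1)))) := by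
      intro k
      have h2 : (0:ℝ) < (Nat.factorial k : ℝ) := by exact_mod_cast Nat.factorial_pos k
      have h3 := gamma_pos' (α+2) hα2 k
      have hΓ : Real.Gamma (((k+1:ℕ):ℝ)+(α+1)+1) = Real.Gamma ((k:ℝ)+(α+2)+1) := by
        push_cast; ring_nf
      have hfac : ((Nat.factorial (k+1) : ℕ) : ℝ) = ((k:ℝ)+1) * (Nat.factorial k : ℝ) := by
        rw [Nat.factorial_succ]; push_cast; ring
      rw [hΓ, hfac, pow_succ]
      push_cast
      have hk1 : (0:ℝ) < (k:ℝ)+1 := by positivity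
      field_simp
      ring
    rw [tsum_congr hterm2, tsum_neg, tsum_mul_left]
    rfl
  have := hdiff.trans ((tsum_congr hterm).trans hshift)
  linarith

lemma besselJ_hasDerivAt (α : ℝ) (hα : -1 < α) (x : ℝ) (hx : 0 < x) :
    HasDerivAt (besselJ α) (α / x * besselJ α x - besselJ (α+1) x) x := by
  have h2 : (0:ℝ) < x/2 := by linarith
  have hg := besselG_hasDerivAt α hα (x^2/4)
  -- inner function y ↦ y^2/4
  have hinner : HasDerivAt (fun y : ℝ => y^2/4) (x/2) x := by
    have := (hasDerivAt_pow 2 x).div_const 4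
    refine this.congr_deriv ?_
    push_cast
    ring
  have hcomp : HasDerivAt (fun y : ℝ => besselG α (y^2/4))
      (-(besselG (α+1) (x^2/4)) * (x/2)) x := by have := hg.comp x hinner; exact this
  have hhalf : HasDerivAt (fun y : ℝ => y/2) (1/2 : ℝ) x := (hasDerivAt_id x).div_const 2
  have hrpow : HasDerivAt (fun y : ℝ => (y/2) ^ α) (1/2 * α * (x/2)^(α-1)) x :=
    hhalf.rpow_const (Or.inl h2.ne')
  have hmul := hrpow.mul hcomp
  have heq : besselJ α =ᶠ[nhds x] fun y => (y/2) ^ α * besselG α (y^2/4) := by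
    filter_upwards [IsOpen.mem_nhds isOpen_Ioi (Set.mem_Ioi.mpr hx)] with y hy
    exact besselJ_eq α y hy
  have hfinal := hmul.congr_of_eventuallyEq heq
  refine hfinal.congr_deriv ?_
  rw [besselJ_eq α x hx, besselJ_eq (α+1) x hx]
  have hsub : (x/2)^(α-1) = (x/2)^α / (x/2) := by
    rw [Real.rpow_sub h2, Real.rpow_one]
  have hadd : (x/2)^(α+1) = (x/2)^α * (x/2) := by
    rw [Real.rpow_add h2, Real.rpow_one]
  rw [hsub, hadd]
  field_simp
  ring

lemma besselJ_succ_hasDerivAt (α : ℝ) (hα : -1 < α) (x : ℝ) (hx : 0 < x) :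
    HasDerivAt (besselJ (α+1)) (besselJ α x - (α+1) / x * besselJ (α+1) x) x := by
  have h := besselJ_hasDerivAt (α+1) (by linarith) x hx
  have h2 : (0:ℝ) < x/2 := by linarith
  -- three-term recurrence
  have hrec : besselJ α x = 2*(α+1)/x * besselJ (α+1) x - besselJ (α+1+1) x := by
    rw [besselJ_eq α x hx, besselJ_eq (α+1) x hx, besselJ_eq (α+1+1) x hx,
      besselG_recurrence α hα (x^2/4)]
    have hadd : (x/2)^(α+1) = (x/2)^α * (x/2) := by
      rw [Real.rpow_add h2, Real.rpow_one]
    have hadd2 : (x/2)^(α+1+1) = (x/2)^α * (x/2) * (x/2) := by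
      rw [Real.rpow_add h2, Real.rpow_add h2, Real.rpow_one]
    rw [hadd, hadd2]
    field_simp
    ring
  have : besselJ α x - (α+1)/x * besselJ (α+1) x
      = (α+1)/x * besselJ (α+1) x - besselJ (α+1+1) x := by
    rw [hrec]; field_simp; ring
  rw [this]
  exact h

lemma besselJ_iterated (α : ℝ) (hα : -1 < α) :
    ∀ m : ℕ, 1 ≤ m → ∃ A B : Polynomial ℝ,
      (∀ k : ℕ, A.coeff k ≠ 0 → Odd k ∧ k ≤ m) ∧
      (∀ k : ℕ, B.coeff k ≠ 0 → Even k ∧ k ≤ m) ∧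
      (Odd m → A.coeff m = (-1:ℝ)^((m+1)/2)) ∧
      (Even m → B.coeff m = (-1:ℝ)^(m/2)) ∧
      (∀ z : ℝ, 0 < z → z^m * iteratedDeriv m (besselJ α) z
        = A.eval z * besselJ (α+1) z + B.eval z * besselJ α z) := by
  intro m hm
  induction m, hm using Nat.le_induction with
  | base =>
    refine ⟨-Polynomial.X, Polynomial.C α, ?_, ?_, ?_, ?_, ?_⟩
    · intro k hk
      rw [Polynomial.coeff_neg, Polynomial.coeff_X] at hk
      rcases eq_or_ne (1:ℕ) k with h | h
      · subst h; exact ⟨odd_one, le_refl 1⟩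
      · simp [h] at hk
    · intro k hk
      rw [Polynomial.coeff_C] at hk
      rcases eq_or_ne k 0 with h | h
      · subst h; exact ⟨Even.zero, Nat.zero_le 1⟩
      · simp [h] at hk
    · intro _
      simp [Polynomial.coeff_neg, Polynomial.coeff_X]
    · intro h
      exact absurd h (by decide)
    · intro z hz
      rw [iteratedDeriv_one, (besselJ_hasDerivAt α hα z hz).deriv]
      simp only [Polynomial.eval_neg, Polynomial.eval_X, Polynomial.eval_C]
      field_simp
      ring
  | succ m hm IH =>
    obtain ⟨A, B, hA, hB, hAl, hBl, heq⟩ := IH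
    refine ⟨Polynomial.X * Polynomial.derivative A - Polynomial.C ((m:ℝ)+α+1) * A
        - Polynomial.X * B,
      Polynomial.X * Polynomial.derivative B + Polynomial.C (α-(m:ℝ)) * B
        + Polynomial.X * A, ?_, ?_, ?_, ?_, ?_⟩
    · -- coefficients of A2
      intro k hk
      have hsplit : A.coeff k ≠ 0 ∨ (1 ≤ k ∧ B.coeff (k-1) ≠ 0) := by
        by_contra hcon
        push_neg at hcon
        obtain ⟨hA0, hB0⟩ := hcon
        apply hk
        rw [Polynomial.coeff_sub, Polynomial.coeff_sub, Polynomial.coeff_C_mul]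
        match k with
        | 0 =>
          simp [Polynomial.mul_coeff_zero, hA0]
        | n+1 =>
          have h1 := hB0 (by omega)
          simp only [Nat.add_sub_cancel] at h1
          rw [Polynomial.coeff_X_mul, Polynomial.coeff_X_mul, Polynomial.coeff_derivative,
            hA0, h1]
          ring
      rcases hsplit with h | ⟨hk1, h⟩
      · obtain ⟨ho, hle⟩ := hA k h
        exact ⟨ho, by omega⟩
      · obtain ⟨he, hle⟩ := hB (k-1) h
        rw [Nat.even_iff] at he
        rw [Nat.odd_iff]
        constructor
        · omega
        · omega
    · -- coefficients of B2
      intro k hk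
      have hsplit : B.coeff k ≠ 0 ∨ (1 ≤ k ∧ A.coeff (k-1) ≠ 0) := by
        by_contra hcon
        push_neg at hcon
        obtain ⟨hB0, hA0⟩ := hcon
        apply hk
        rw [Polynomial.coeff_add, Polynomial.coeff_add, Polynomial.coeff_C_mul]
        match k with
        | 0 =>
          simp [Polynomial.mul_coeff_zero, hB0]
        | n+1 =>
          have h1 := hA0 (by omega)
          simp only [Nat.add_sub_cancel] at h1
          rw [Polynomial.coeff_X_mul, Polynomial.coeff_X_mul, Polynomial.coeff_derivative,
            hB0, h1]
          ring
      rcases hsplit with h | ⟨hk1, h⟩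
      · obtain ⟨he, hle⟩ := hB k h
        exact ⟨he, by omega⟩
      · obtain ⟨ho, hle⟩ := hA (k-1) h
        rw [Nat.odd_iff] at ho
        rw [Nat.even_iff]
        constructor
        · omega
        · omega
    · -- leading coeff of A2 when m+1 odd
      intro hodd
      have hmeven : Even m := by
        rw [Nat.odd_iff] at hodd; rw [Nat.even_iff]; omega
      have hBm := hBl hmeven
      have hAm1 : A.coeff (m+1) = 0 := by
        by_contra h
        exact absurd (hA (m+1) h).2 (by omega)
      rw [Polynomial.coeff_sub, Polynomial.coeff_sub, Polynomial.coeff_C_mul,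
        Polynomial.coeff_X_mul, Polynomial.coeff_X_mul, Polynomial.coeff_derivative,
        hAm1, hBm]
      have hexp : (m+1+1)/2 = m/2 + 1 := by omega
      rw [hexp, pow_succ]
      simp [show m+1-1 = m by omega, hAm1]
    · -- leading coeff of B2 when m+1 even
      intro heven
      have hmodd : Odd m := by
        rw [Nat.even_iff] at heven; rw [Nat.odd_iff]; omega
      have hAm := hAl hmodd
      have hBm1 : B.coeff (m+1) = 0 := by
        by_contra h
        exact absurd (hB (m+1) h).2 (by omega)
      rw [Polynomial.coeff_add, Polynomial.coeff_add, Polynomial.coeff_C_mul,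
        Polynomial.coeff_X_mul, Polynomial.coeff_X_mul, Polynomial.coeff_derivative,
        hBm1, hAm]
      simp [show m+1-1 = m by omega, hBm1]
    · -- the differential identity
      intro z hz
      have hzne : z ≠ 0 := hz.ne'
      have hJ := besselJ_hasDerivAt α hα z hz
      have hJ1 := besselJ_succ_hasDerivAt α hα z hz
      have hnum : HasDerivAt
          (fun w => A.eval w * besselJ (α+1) w + B.eval w * besselJ α w)
          (A.derivative.eval z * besselJ (α+1) z
            + A.eval z * (besselJ α z - (α+1)/z * besselJ (α+1) z)
            + (B.derivative.eval z * besselJ α z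
            + B.eval z * (α/z * besselJ α z - besselJ (α+1) z))) z :=
        ((A.hasDerivAt z).mul hJ1).add ((B.hasDerivAt z).mul hJ)
      have hu : HasDerivAt
          (fun w => (A.eval w * besselJ (α+1) w + B.eval w * besselJ α w) / w^m) _ z :=
        hnum.div (hasDerivAt_pow m z) (pow_ne_zero m hzne)
      have hEq : iteratedDeriv m (besselJ α) =ᶠ[nhds z]
          (fun w => (A.eval w * besselJ (α+1) w + B.eval w * besselJ α w) / w^m) := by
        filter_upwards [isOpen_Ioi.mem_nhds (Set.mem_Ioi.mpr hz)] with w hw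
        rw [Set.mem_Ioi] at hw
        have h := heq w hw
        rw [eq_div_iff (pow_ne_zero m hw.ne')]
        linarith [h]
      rw [iteratedDeriv_succ, hEq.deriv_eq, hu.deriv]
      simp only [Polynomial.eval_sub, Polynomial.eval_add, Polynomial.eval_mul,
        Polynomial.eval_X, Polynomial.eval_C]
      obtain ⟨n, rfl⟩ : ∃ n, m = n + 1 := ⟨m - 1, by omega⟩
      simp only [show n+1-1 = n by omega]
      push_cast
      field_simp
      ring

theorem stmt_9 (α : ℝ) (hα : -1 < α) (j : ℕ) (hj : 1 ≤ j) :
    ∃ P Q : Polynomial ℝ,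
      (∀ k : ℕ, P.coeff k ≠ 0 → Odd k ∧ k ≤ 2 * j - 3) ∧
      (∀ k : ℕ, Q.coeff k ≠ 0 → Even k ∧ k ≤ 2 * j - 2) ∧
      ∀ z : ℝ, 0 < z →
        z ^ (2 * j - 1) * iteratedDeriv (2 * j - 1) (besselJ α) z =
          ((-1 : ℝ) ^ j * z ^ (2 * j - 1) + P.eval z) * besselJ (α + 1) z +
            Q.eval z * besselJ α z := by
  obtain ⟨A, B, hA, hB, hAl, _, heq⟩ := besselJ_iterated α hα (2*j-1) (by omega)
  have hodd : Odd (2*j-1) := by rw [Nat.odd_iff]; omega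
  have hlead : A.coeff (2*j-1) = (-1:ℝ)^j := by
    rw [hAl hodd, show (2*j-1+1)/2 = j by omega]
  refine ⟨A - Polynomial.C ((-1:ℝ)^j) * Polynomial.X^(2*j-1), B, ?_, ?_, ?_⟩
  · intro k hk
    rw [Polynomial.coeff_sub, Polynomial.coeff_C_mul, Polynomial.coeff_X_pow] at hk
    rcases eq_or_ne k (2*j-1) with h | h
    · subst h
      rw [if_pos rfl, mul_one, hlead, sub_self] at hk
      exact absurd rfl hk
    · rw [if_neg h, mul_zero, sub_zero] at hk
      obtain ⟨ho, hle⟩ := hA k hk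
      rw [Nat.odd_iff] at ho ⊢
      exact ⟨ho, by omega⟩
  · intro k hk
    obtain ⟨he, hle⟩ := hB k hk
    rw [Nat.even_iff] at he
    refine ⟨Nat.even_iff.mpr he, by omega⟩
  · intro z hz
    rw [heq z hz]
    simp only [Polynomial.eval_sub, Polynomial.eval_mul, Polynomial.eval_C,
      Polynomial.eval_pow, Polynomial.eval_X]
    ring
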